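/- Let A be an endomorphism of an n-dimensional vector space and T_r = Σ_{j=0}^r (−1)^j S_j A^{r−j} its Newton transformations, where det(I + tA) = Σ_r S_r t^r. If A(t) is a smooth family with A(0) = A and S_r(t) the corresponding symmetric functions, then (d/dt) S_r(t)|_{t=0} = tr( (d/dt)A(t)|_{t=0} · T_{r−1} ). -/

import Mathlib

open MvPolynomial Matrix

/-- The generalized symmetric function `σ_u(A)`: the coefficient of `t^u` in
`det(I + t₁A₁ + ⋯ + t_qA_q)`. -/
noncomputable def gsigma {n q : ℕ} (A : Fin q → Matrix (Fin n) (Fin n) ℝ)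
    (u : Fin q → ℕ) : ℝ :=
  MvPolynomial.coeff (Finsupp.equivFunOnFinite.symm u)
    ((1 + ∑ α, (MvPolynomial.X α : MvPolynomial (Fin q) ℝ) • (A α).map MvPolynomial.C).det)

/-- Auxiliary recursion (on `|u|`) for the generalized Newton transformation. -/
noncomputable def newtonAux {n q : ℕ} (A : Fin q → Matrix (Fin n) (Fin n) ℝ) :
    ℕ → (Fin q → ℕ) → Matrix (Fin n) (Fin n) ℝ
  | 0, _ => 1
  | k + 1, u =>
      gsigma A u • (1 : Matrix (Fin n) (Fin n) ℝ) -
        ∑ α, if 1 ≤ u α then A α * newtonAux A k (Function.update u α (u α - 1)) else 0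

/-- The generalized Newton transformation `T_u`, defined by `T_0 = I` and
`T_u = σ_u I - ∑_α A_α T_{α♭(u)}`. -/
noncomputable def newton {n q : ℕ} (A : Fin q → Matrix (Fin n) (Fin n) ℝ)
    (u : Fin q → ℕ) : Matrix (Fin n) (Fin n) ℝ :=
  newtonAux A (∑ i, u i) u

section Helper

variable {n : ℕ}

/-- the matrix `1 + x • A` over `ℝ[x]` (as `MvPolynomial (Fin 1) ℝ`). -/
noncomputable def Mx (A : Matrix (Fin n) (Fin n) ℝ) :
    Matrix (Fin n) (Fin n) (MvPolynomial (Fin 1) ℝ) :=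
  1 + (X 0 : MvPolynomial (Fin 1) ℝ) • A.map C

lemma equivFun_const (r : ℕ) :
    (Finsupp.equivFunOnFinite.symm (fun _ : Fin 1 => r)) = Finsupp.single 0 r := by
  apply Finsupp.ext
  intro a
  have : a = 0 := Subsingleton.elim _ _
  simp [this, Finsupp.single_apply]

lemma gsigma_eq (A : Matrix (Fin n) (Fin n) ℝ) (k : ℕ) :
    gsigma (fun _ : Fin 1 => A) (fun _ => k) = coeff (Finsupp.single 0 k) (det (Mx A)) := by
  rw [gsigma, equivFun_const, Mx, Fin.sum_univ_one]

lemma newton_zero (A : Matrix (Fin n) (Fin n) ℝ) :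
    newton (fun _ : Fin 1 => A) (fun _ => (0:ℕ)) = 1 := by
  simp [newton, newtonAux]

lemma newton_succ (A : Matrix (Fin n) (Fin n) ℝ) (k : ℕ) :
    newton (fun _ : Fin 1 => A) (fun _ => k + 1) =
      gsigma (fun _ : Fin 1 => A) (fun _ => k + 1) • (1 : Matrix (Fin n) (Fin n) ℝ) -
        A * newton (fun _ : Fin 1 => A) (fun _ => k) := by
  have hupd : Function.update (fun _ : Fin 1 => k + 1) 0 (k + 1 - 1) = fun _ : Fin 1 => k := by
    funext a
    have : a = 0 := Subsingleton.elim _ _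
    simp [this, Function.update]
  rw [newton, Fin.sum_univ_one, newton, Fin.sum_univ_one]
  show newtonAux _ (k+1) _ = _
  rw [newtonAux, Fin.sum_univ_one, hupd, if_pos (Nat.succ_le_succ (Nat.zero_le k))]

end Helper

section L1
variable {n : ℕ}

lemma Mx_apply (A : Matrix (Fin n) (Fin n) ℝ) (i j : Fin n) :
    Mx A i j = (1 : Matrix (Fin n) (Fin n) (MvPolynomial (Fin 1) ℝ)) i j + X 0 * C (A i j) := by
  simp [Mx, Matrix.add_apply, Matrix.smul_apply, smul_eq_mul, Matrix.map_apply]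

lemma adj_coeff (A : Matrix (Fin n) (Fin n) ℝ) (k : ℕ) (i j : Fin n) :
    coeff (Finsupp.single 0 k) (adjugate (Mx A) i j) =
      newton (fun _ : Fin 1 => A) (fun _ => k) i j := by
  induction k generalizing i j with
  | zero =>
    have h1 : (constantCoeff (σ := Fin 1) (R := ℝ)).mapMatrix (Mx A) = 1 := by
      ext i j
      by_cases h : i = j <;>
        simp [Mx, Matrix.add_apply, Matrix.smul_apply, smul_eq_mul, Matrix.map_apply,
          Matrix.one_apply, h]
    have h2 := (RingHom.map_adjugate (constantCoeff (σ := Fin 1) (R := ℝ)) (Mx A))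
    rw [h1, adjugate_one] at h2
    have h3 : constantCoeff ((Mx A).adjugate i j) = (1 : Matrix (Fin n) (Fin n) ℝ) i j :=
      congrFun (congrFun h2 i) j
    rw [newton_zero, Finsupp.single_zero, ← constantCoeff_eq]
    exact h3
  | succ k ih =>
    have hX : ∀ p : MvPolynomial (Fin 1) ℝ,
        coeff (Finsupp.single 0 (k+1)) (X 0 * p) = coeff (Finsupp.single 0 k) p := by
      intro p
      have hs : (Finsupp.single (0 : Fin 1) (k+1)) = Finsupp.single 0 1 + Finsupp.single 0 k := by
        rw [← Finsupp.single_add, add_comm]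
      rw [hs, coeff_X_mul]
    have h : (Mx A * adjugate (Mx A)) i j
        = (Mx A).det * (1 : Matrix (Fin n) (Fin n) (MvPolynomial (Fin 1) ℝ)) i j := by
      rw [mul_adjugate, Matrix.smul_apply, smul_eq_mul]
    have hL : ∀ l, Mx A i l * adjugate (Mx A) l j
        = (1 : Matrix (Fin n) (Fin n) (MvPolynomial (Fin 1) ℝ)) i l * adjugate (Mx A) l j
          + X 0 * (C (A i l) * adjugate (Mx A) l j) := by
      intro l; rw [Mx_apply, add_mul, mul_assoc]
    calc coeff (Finsupp.single 0 (k+1)) (adjugate (Mx A) i j)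
        = coeff (Finsupp.single 0 (k+1)) ((Mx A * adjugate (Mx A)) i j)
          - ∑ l, A i l * coeff (Finsupp.single 0 k) (adjugate (Mx A) l j) := by
          rw [Matrix.mul_apply]
          simp only [hL, Finset.sum_add_distrib, MvPolynomial.coeff_sum, MvPolynomial.coeff_add, hX, coeff_C_mul]
          have hone : ∑ l, coeff (Finsupp.single 0 (k+1))
              ((1 : Matrix (Fin n) (Fin n) (MvPolynomial (Fin 1) ℝ)) i l * adjugate (Mx A) l j)
              = coeff (Finsupp.single 0 (k+1)) (adjugate (Mx A) i j) := by
            rw [Finset.sum_eq_single i]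
            · rw [Matrix.one_apply_eq, one_mul]
            · intro l _ hl; rw [Matrix.one_apply_ne' hl, zero_mul, MvPolynomial.coeff_zero]
            · intro habs; exact absurd (Finset.mem_univ i) habs
          rw [hone]; ring
      _ = gsigma (fun _ : Fin 1 => A) (fun _ => k + 1) * (1 : Matrix (Fin n) (Fin n) ℝ) i j
          - (A * newton (fun _ : Fin 1 => A) (fun _ => k)) i j := by
          rw [h]
          congr 1
          · by_cases hij : i = j
            · rw [hij, Matrix.one_apply_eq, Matrix.one_apply_eq, mul_one, mul_one, gsigma_eq]
            · rw [Matrix.one_apply_ne hij, Matrix.one_apply_ne hij, mul_zero, mul_zero, MvPolynomial.coeff_zero]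
          · rw [Matrix.mul_apply]
            exact Finset.sum_congr rfl fun l _ => by rw [ih]
      _ = newton (fun _ : Fin 1 => A) (fun _ => k + 1) i j := by
          rw [newton_succ, Matrix.sub_apply, Matrix.smul_apply, smul_eq_mul]

section K
variable {R : Type*} [CommRing R] {m : ℕ}

lemma sum_compl_card_one (f : Finset (Fin m) → R) :
    (∑ s : Finset (Fin m), if sᶜ.card = 1 then f s else 0) = ∑ i : Fin m, f ({i}ᶜ) := by
  classical
  rw [← Finset.sum_filter]
  refine (Finset.sum_bij (fun i (_ : i ∈ Finset.univ) => ({i}ᶜ : Finset (Fin m))) ?_ ?_ ?_ ?_).symm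
  · intro a _; simp [Finset.mem_filter]
  · intro a _ b _ h
    have := congrArg (fun s : Finset (Fin m) => sᶜ) h
    simpa using this
  · intro s hs
    rw [Finset.mem_filter] at hs
    obtain ⟨a, ha⟩ := Finset.card_eq_one.mp hs.2
    exact ⟨a, Finset.mem_univ a, by show ({a}ᶜ : Finset (Fin m)) = s; rw [← ha, compl_compl]⟩
  · intro a _; rfl

open Polynomial in
lemma coeff_one_det_add (M N : Matrix (Fin m) (Fin m) R) :
    (det (M.map Polynomial.C + (Polynomial.X : Polynomial R) • N.map Polynomial.C)).coeff 1 =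
      trace (adjugate M * N) := by
  classical
  have hexp := (detRowAlternating (n := Fin m) (R := Polynomial R)).toMultilinearMap.map_add_univ
      (M.map Polynomial.C) ((Polynomial.X : Polynomial R) • N.map Polynomial.C)
  have hdet : det (M.map Polynomial.C + (Polynomial.X : Polynomial R) • N.map Polynomial.C) =
      ∑ s : Finset (Fin m),
        Polynomial.X ^ (sᶜ.card) * Polynomial.C (det (Matrix.of (s.piecewise M N))) := by
    refine hexp.trans ?_
    refine Finset.sum_congr rfl fun s _ => ?_
    have h1 : s.piecewise (M.map Polynomial.C : Matrix (Fin m) (Fin m) (Polynomial R))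
          ((Polynomial.X : Polynomial R) • N.map Polynomial.C)
        = sᶜ.piecewise
            (fun i => (Polynomial.X : Polynomial R) •
              ((Matrix.of (s.piecewise M N)).map Polynomial.C) i)
            ((Matrix.of (s.piecewise M N)).map Polynomial.C) := by
      funext i j
      by_cases hi : i ∈ s <;>
        simp [Finset.piecewise, hi, Matrix.map_apply, Matrix.smul_apply, Matrix.of_apply]
    rw [h1]
    erw [MultilinearMap.map_piecewise_smul]
    rw [Finset.prod_const, smul_eq_mul]
    congr 1
    rw [show ((detRowAlternating (n := Fin m) (R := Polynomial R)).toMultilinearMap)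
        ((Matrix.of (s.piecewise M N)).map Polynomial.C)
        = det ((Matrix.of (s.piecewise M N)).map Polynomial.C) from rfl]
    exact (RingHom.map_det (Polynomial.C : R →+* Polynomial R) (Matrix.of (s.piecewise M N))).symm
  rw [hdet, Polynomial.finset_sum_coeff]
  have hterm : ∀ s : Finset (Fin m),
      (Polynomial.X ^ (sᶜ.card) *
        Polynomial.C (det (Matrix.of (s.piecewise M N)))).coeff 1
      = if sᶜ.card = 1 then det (Matrix.of (s.piecewise M N)) else 0 := by
    intro s
    rw [mul_comm, Polynomial.C_mul_X_pow_eq_monomial, Polynomial.coeff_monomial]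
  simp only [hterm]
  rw [sum_compl_card_one]
  have hup : ∀ i : Fin m, Matrix.of (({i}ᶜ : Finset (Fin m)).piecewise M N)
      = updateRow M i (N i) := by
    intro i
    funext l j
    by_cases h : l = i
    · subst h; simp [Finset.piecewise, Matrix.updateRow_self]
    · simp [Finset.piecewise, h, Matrix.updateRow_ne h]
  have hrow : ∀ i : Fin m, det (updateRow M i (N i)) = ∑ j, adjugate M j i * N i j := by
    intro i
    rw [← cramer_transpose_apply, cramer_eq_adjugate_mulVec, ← adjugate_transpose]
    rw [Matrix.mulVec]
    simp [dotProduct, Matrix.transpose_apply, mul_comm]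
  simp only [hup, hrow]
  rw [Matrix.trace]
  rw [Finset.sum_comm]
  refine Finset.sum_congr rfl fun j _ => ?_
  simp [Matrix.diag, Matrix.mul_apply, mul_comm]
end K

section ChainRule

lemma hasDerivAt_mveval {ι : Type*} [Fintype ι] [DecidableEq ι] (c : ℝ → ι → ℝ) (c' : ι → ℝ)
    (t0 : ℝ) (hc : ∀ i, HasDerivAt (fun t => c t i) (c' i) t0) (Q : MvPolynomial ι ℝ) :
    HasDerivAt (fun t => MvPolynomial.eval (c t) Q)
      (∑ i, MvPolynomial.eval (c t0) (MvPolynomial.pderiv i Q) * c' i) t0 := by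
  induction Q using MvPolynomial.induction_on with
  | C a => simpa using hasDerivAt_const t0 a
  | add p q hp hq =>
      have := hp.add hq
      convert this using 1
      · rfl
      · rfl
      · funext t; simp
      · simp [Finset.sum_add_distrib, add_mul]
  | mul_X p i hp =>
      have key := hp.mul (hc i)
      have hfun : (fun t => MvPolynomial.eval (c t) (p * X i))
          = fun t => MvPolynomial.eval (c t) p * c t i := by
        funext t; simp
      rw [hfun]
      convert key using 1
      · rfl
      · rfl
      · rfl
      have hpd : ∀ j, MvPolynomial.eval (c t0) (pderiv j (p * X i))
          = MvPolynomial.eval (c t0) (pderiv j p) * c t0 i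
            + MvPolynomial.eval (c t0) p * (if j = i then 1 else 0) := by
        intro j
        rw [pderiv_mul, pderiv_X, eval_add, eval_mul, eval_X]
        congr 1
        by_cases h : j = i <;> simp [Pi.single_apply, h]
      simp only [hpd, add_mul, Finset.sum_add_distrib]
      congr 1
      · rw [Finset.sum_mul]
        exact Finset.sum_congr rfl fun j _ => by ring
      · have : ∀ j, (MvPolynomial.eval (c t0) p * (if j = i then 1 else 0)) * c' j
            = if j = i then MvPolynomial.eval (c t0) p * c' j else 0 := by
          intro j; by_cases h : j = i <;> simp [h]
        simp only [this]
        rw [Finset.sum_ite_eq']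
        simp

end ChainRule

section QDef
variable {n : ℕ}

noncomputable def Qp (n r : ℕ) : MvPolynomial (Fin n × Fin n) ℝ :=
  MvPolynomial.coeff (Finsupp.single 0 r)
    (det ((1 + (X 0 : MvPolynomial (Fin 1) (MvPolynomial (Fin n × Fin n) ℝ)) •
      (Matrix.of fun i j : Fin n => (X (i, j) : MvPolynomial (Fin n × Fin n) ℝ)).map C :
        Matrix (Fin n) (Fin n) (MvPolynomial (Fin 1) (MvPolynomial (Fin n × Fin n) ℝ)))))

lemma eval_Qp (r : ℕ) (M : Matrix (Fin n) (Fin n) ℝ) :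
    MvPolynomial.eval (fun p : Fin n × Fin n => M p.1 p.2) (Qp n r)
      = gsigma (fun _ : Fin 1 => M) (fun _ => r) := by
  rw [gsigma_eq, Qp, ← MvPolynomial.coeff_map]
  congr 1
  rw [RingHom.map_det]
  congr 1
  ext i j
  by_cases h : i = j <;>
    simp [Mx, Matrix.add_apply, Matrix.smul_apply, smul_eq_mul, Matrix.map_apply,
      Matrix.one_apply, h, MvPolynomial.map_X, MvPolynomial.map_C]

end QDef

section Halg
variable {n : ℕ}

lemma deriv_linear_path (A H : Matrix (Fin n) (Fin n) ℝ) (r : ℕ) (hr : 1 ≤ r) :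
    deriv (fun s : ℝ => gsigma (fun _ : Fin 1 => A + s • H) (fun _ => r)) 0 =
      (H * newton (fun _ : Fin 1 => A) (fun _ => r - 1)).trace := by
  classical
  set Nm : Matrix (Fin n) (Fin n) (MvPolynomial (Fin 1) ℝ) :=
    (X 0 : MvPolynomial (Fin 1) ℝ) • H.map C with hNm
  set P : Polynomial (MvPolynomial (Fin 1) ℝ) :=
    det ((Mx A).map Polynomial.C +
      (Polynomial.X : Polynomial (MvPolynomial (Fin 1) ℝ)) • Nm.map Polynomial.C) with hP
  set b : ℕ → ℝ := fun k => MvPolynomial.coeff (Finsupp.single 0 r) (P.coeff k) with hb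
  have hi : ∀ s : ℝ, gsigma (fun _ : Fin 1 => A + s • H) (fun _ => r)
      = MvPolynomial.coeff (Finsupp.single 0 r) (Polynomial.eval (MvPolynomial.C s) P) := by
    intro s
    rw [gsigma_eq]
    congr 1
    rw [show Polynomial.eval (MvPolynomial.C s) P
        = (Polynomial.evalRingHom (MvPolynomial.C s)) P from rfl, hP, RingHom.map_det]
    congr 1
    apply Matrix.ext
    intro i j
    have hL : (Polynomial.evalRingHom (MvPolynomial.C s)).mapMatrix
        ((Mx A).map Polynomial.C +
          (Polynomial.X : Polynomial (MvPolynomial (Fin 1) ℝ)) • Nm.map Polynomial.C) i j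
        = Mx A i j + MvPolynomial.C s * Nm i j := by
      simp [Matrix.add_apply, Matrix.smul_apply, Matrix.map_apply, smul_eq_mul]
      ring
    rw [hL, Mx_apply, Mx_apply, hNm, Matrix.smul_apply, Matrix.map_apply, Matrix.add_apply,
      Matrix.smul_apply, smul_eq_mul, MvPolynomial.C_add, MvPolynomial.C_mul, smul_eq_mul]
    ring
  have hm0 : P.natDegree < P.natDegree + 2 := by omega
  have hsum : ∀ s : ℝ, gsigma (fun _ : Fin 1 => A + s • H) (fun _ => r)
      = ∑ k ∈ Finset.range (P.natDegree + 2), b k * s ^ k := by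
    intro s
    rw [hi s, Polynomial.eval_eq_sum_range' hm0, MvPolynomial.coeff_sum]
    refine Finset.sum_congr rfl fun k _ => ?_
    rw [← map_pow, mul_comm (P.coeff k), coeff_C_mul, mul_comm]
  have hderiv : HasDerivAt (fun s : ℝ => ∑ k ∈ Finset.range (P.natDegree + 2), b k * s ^ k)
      (∑ k ∈ Finset.range (P.natDegree + 2), b k * ((k : ℝ) * (0:ℝ) ^ (k-1))) 0 :=
    HasDerivAt.fun_sum fun k _ => (hasDerivAt_pow k 0).const_mul (b k)
  have hval : (∑ k ∈ Finset.range (P.natDegree + 2), b k * ((k:ℝ) * (0:ℝ) ^ (k-1))) = b 1 := by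
    rw [Finset.sum_eq_single 1]
    · norm_num
    · intro k _ hk1
      rcases Nat.eq_zero_or_pos k with h0 | h0
      · subst h0; norm_num
      · rw [zero_pow (by omega : k - 1 ≠ 0)]; ring
    · intro h1; exact absurd (Finset.mem_range.mpr (by omega)) h1
  have hD : deriv (fun s : ℝ => gsigma (fun _ : Fin 1 => A + s • H) (fun _ => r)) 0 = b 1 := by
    have hfe : (fun s : ℝ => gsigma (fun _ : Fin 1 => A + s • H) (fun _ => r))
        = fun s => ∑ k ∈ Finset.range (P.natDegree + 2), b k * s ^ k := funext hsum
    rw [hfe, hderiv.deriv, hval]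
  rw [hD]
  show MvPolynomial.coeff (Finsupp.single 0 r) (P.coeff 1) = _
  have hb1 : P.coeff 1 = trace (adjugate (Mx A) * Nm) := coeff_one_det_add (Mx A) Nm
  rw [hb1]
  have hsingle : (Finsupp.single (0:Fin 1) r) = Finsupp.single 0 1 + Finsupp.single 0 (r-1) := by
    rw [← Finsupp.single_add]; congr 1; omega
  have hentry : ∀ i, (adjugate (Mx A) * Nm) i i
      = X 0 * ∑ j, C (H j i) * adjugate (Mx A) i j := by
    intro i
    rw [Matrix.mul_apply, Finset.mul_sum]
    refine Finset.sum_congr rfl fun j _ => ?_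
    rw [hNm, Matrix.smul_apply, Matrix.map_apply, smul_eq_mul]
    ring
  rw [Matrix.trace, MvPolynomial.coeff_sum]
  simp only [Matrix.diag_apply, hentry, hsingle, coeff_X_mul, MvPolynomial.coeff_sum,
    coeff_C_mul, adj_coeff]
  rw [Matrix.trace, Finset.sum_comm]
  refine Finset.sum_congr rfl fun j _ => ?_
  rw [Matrix.diag_apply, Matrix.mul_apply]

end Halg

theorem deriv_sigma_codim_one {n : ℕ} (B : ℝ → Matrix (Fin n) (Fin n) ℝ)
    (hB : ∀ i j, Differentiable ℝ (fun t => B t i j)) (r : ℕ) (hr : 1 ≤ r) :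
    deriv (fun t => gsigma (fun _ : Fin 1 => B t) (fun _ => r)) 0 =
      ((Matrix.of fun i j => deriv (fun t => B t i j) 0) *
        newton (fun _ : Fin 1 => B 0) (fun _ => r - 1)).trace := by
  classical
  set A : Matrix (Fin n) (Fin n) ℝ := B 0 with hA
  set H : Matrix (Fin n) (Fin n) ℝ := Matrix.of fun i j => deriv (fun t => B t i j) 0 with hH
  have hg : HasDerivAt (fun t => gsigma (fun _ : Fin 1 => B t) (fun _ => r))
      (∑ p : Fin n × Fin n,
        MvPolynomial.eval (fun q : Fin n × Fin n => B 0 q.1 q.2) (pderiv p (Qp n r))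
          * H p.1 p.2) 0 := by
    have h := hasDerivAt_mveval (fun t (q : Fin n × Fin n) => B t q.1 q.2)
        (fun q => H q.1 q.2) 0 (fun q => ((hB q.1 q.2) 0).hasDerivAt) (Qp n r)
    have hfe : (fun t => MvPolynomial.eval (fun q : Fin n × Fin n => B t q.1 q.2) (Qp n r))
        = fun t => gsigma (fun _ : Fin 1 => B t) (fun _ => r) := by
      funext t; exact eval_Qp r (B t)
    rw [← hfe]
    exact h
  have hlin : HasDerivAt (fun s : ℝ => gsigma (fun _ : Fin 1 => A + s • H) (fun _ => r))
      (∑ p : Fin n × Fin n,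
        MvPolynomial.eval (fun q : Fin n × Fin n => B 0 q.1 q.2) (pderiv p (Qp n r))
          * H p.1 p.2) 0 := by
    have h := hasDerivAt_mveval (fun s (q : Fin n × Fin n) => A q.1 q.2 + s * H q.1 q.2)
        (fun q => H q.1 q.2) 0
        (fun q => by
          simpa using ((hasDerivAt_id (0:ℝ)).mul_const (H q.1 q.2)).const_add (A q.1 q.2))
        (Qp n r)
    have hc0 : (fun q : Fin n × Fin n => A q.1 q.2 + (0:ℝ) * H q.1 q.2)
        = fun q : Fin n × Fin n => B 0 q.1 q.2 := by
      funext q; rw [hA]; ring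
    rw [hc0] at h
    have hfe2 : (fun s : ℝ => MvPolynomial.eval
          (fun q : Fin n × Fin n => A q.1 q.2 + s * H q.1 q.2) (Qp n r))
        = fun s => gsigma (fun _ : Fin 1 => A + s • H) (fun _ => r) := by
      funext s
      have hq : (fun q : Fin n × Fin n => A q.1 q.2 + s * H q.1 q.2)
          = fun q : Fin n × Fin n => (A + s • H) q.1 q.2 := by
        funext q; simp [Matrix.add_apply, Matrix.smul_apply, smul_eq_mul]
      rw [hq]
      exact eval_Qp r (A + s • H)
    rw [hfe2] at h
    exact h
  rw [hg.deriv, ← hlin.deriv, deriv_linear_path A H r hr]
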